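/- An orientation O of the n-cube is a unique sink orientation (every nonempty face contains exactly one sink of that face) if and only if for every pair of distinct vertices v,w there exists a dimension i with v_i ≠ w_i and O(v)_i ≠ O(w)_i, assuming edges are oriented consistently (O(v)_i = + iff O(v ⊕ e_i)_i = -). -/

import Mathlib

/-- A face of the `n`-cube, given by fixing some coordinates. -/
def memFace {n : ℕ} (f : Fin n → Option Bool) (v : Fin n → Bool) : Prop :=
  ∀ i, ∀ b, f i = some b → v i = b

/-- `v` is a sink of the face `f`: it lies in `f` and all half-edges in dimensions
spanned by `f` are incoming (`false` = `-`). -/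
def isSinkOf {n : ℕ} (O : (Fin n → Bool) → Fin n → Bool)
    (f : Fin n → Option Bool) (v : Fin n → Bool) : Prop :=
  memFace f v ∧ ∀ i, f i = none → O v i = false

/-- A unique sink orientation: every (nonempty) face has exactly one sink. -/
def IsUSO {n : ℕ} (O : (Fin n → Bool) → Fin n → Bool) : Prop :=
  ∀ f : Fin n → Option Bool, ∃! v, isSinkOf O f v

/-- Edges are oriented consistently. -/
def Consistent {n : ℕ} (O : (Fin n → Bool) → Fin n → Bool) : Prop :=
  ∀ v i, O (Function.update v i (!(v i))) i = !(O v i)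

namespace SWaux
open Finset

variable {n : ℕ}

/-- The face as a finset of vertices. -/
def faceSet (f : Fin n → Option Bool) : Finset (Fin n → Bool) :=
  univ.filter (fun v => ∀ i, ∀ b, f i = some b → v i = b)

/-- The free dimensions of a face. -/
def dims (f : Fin n → Option Bool) : Finset (Fin n) :=
  univ.filter (fun i => f i = none)

/-- Outgoing dimensions (within the face `f`) of a vertex. -/
def outmap (O : (Fin n → Bool) → Fin n → Bool) (f : Fin n → Option Bool)
    (v : Fin n → Bool) : Finset (Fin n) :=
  univ.filter (fun i => f i = none ∧ O v i = true)

lemma mem_faceSet {f : Fin n → Option Bool} {v : Fin n → Bool} :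
    v ∈ faceSet f ↔ memFace f v := by
  simp [faceSet, memFace]

lemma mem_dims {f : Fin n → Option Bool} {i : Fin n} :
    i ∈ dims f ↔ f i = none := by simp [dims]

lemma mem_outmap {O : (Fin n → Bool) → Fin n → Bool} {f : Fin n → Option Bool}
    {v : Fin n → Bool} {i : Fin n} :
    i ∈ outmap O f v ↔ f i = none ∧ O v i = true := by simp [outmap]

lemma outmap_subset_dims {O : (Fin n → Bool) → Fin n → Bool} {f : Fin n → Option Bool}
    {v : Fin n → Bool} : outmap O f v ⊆ dims f := by
  intro i hi
  rw [mem_dims]; exact (mem_outmap.mp hi).1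

/-- Counting lemma A: vertices of the face whose outmap is contained in `z`
(equivalently, sinks of the subfaces spanned by the complement of `z`)
number exactly `2 ^ #z`. -/
lemma cardA (O : (Fin n → Bool) → Fin n → Bool) (hU : IsUSO O)
    (f : Fin n → Option Bool) (z : Finset (Fin n)) (hz : z ⊆ dims f) :
    ((faceSet f).filter (fun u => outmap O f u ⊆ z)).card = 2 ^ z.card := by
  rw [← card_powerset]
  apply card_bij (fun u _ => z.filter (fun j => u j = true))
  · intro u _; exact mem_powerset.mpr (filter_subset _ _)
  · -- injectivity via unique sink of the subface
    intro u hu u' hu' heq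
    simp only [mem_filter, mem_faceSet] at hu hu'
    set f' : Fin n → Option Bool := fun i => if i ∈ z then some (u i) else f i with hf'
    have hsink : ∀ w : Fin n → Bool, memFace f w → outmap O f w ⊆ z →
        (∀ i ∈ z, w i = u i) → isSinkOf O f' w := by
      intro w hw hwz hagree
      constructor
      · intro i b hb
        by_cases hiz : i ∈ z
        · simp only [hf', if_pos hiz] at hb
          rw [hagree i hiz]; exact Option.some_injective _ hb
        · simp only [hf', if_neg hiz] at hb
          exact hw i b hb
      · intro i hi
        by_cases hiz : i ∈ z
        · simp [hf', if_pos hiz] at hi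
        · simp only [hf', if_neg hiz] at hi
          by_contra hO
          exact hiz (hwz (mem_outmap.mpr ⟨hi, by simpa using hO⟩))
    have h1 : isSinkOf O f' u := hsink u hu.1 hu.2 (fun i _ => rfl)
    have h2 : isSinkOf O f' u' := by
      apply hsink u' hu'.1 hu'.2
      intro i hiz
      have := Finset.ext_iff.mp heq i
      simp only [mem_filter, hiz, true_and] at this
      exact Bool.coe_iff_coe.mp this.symm
    obtain ⟨s, _, hs⟩ := hU f'
    rw [hs u' h2, hs u h1]
  · -- surjectivity: the sink of each subface
    intro c hc
    rw [mem_powerset] at hc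
    set f' : Fin n → Option Bool := fun i => if i ∈ z then some (decide (i ∈ c)) else f i with hf'
    obtain ⟨u, hu, -⟩ := hU f'
    have huz : ∀ i ∈ z, u i = decide (i ∈ c) := by
      intro i hiz
      exact hu.1 i _ (by simp [hf', if_pos hiz])
    refine ⟨u, ?_, ?_⟩
    · rw [mem_filter, mem_faceSet]
      constructor
      · intro i b hb
        have hiz : i ∉ z := by
          intro hiz
          rw [mem_dims.mp (hz hiz)] at hb; exact Option.some_ne_none b hb.symm
        exact hu.1 i b (by simpa [hf', if_neg hiz] using hb)
      · intro i hi
        rw [mem_outmap] at hi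
        by_contra hiz
        have := hu.2 i (by simp [hf', if_neg hiz, hi.1])
        rw [hi.2] at this; exact Bool.noConfusion this
    · ext i
      simp only [mem_filter]
      constructor
      · rintro ⟨hiz, hui⟩
        have := huz i hiz
        rw [hui] at this
        exact of_decide_eq_true this.symm
      · intro hic
        exact ⟨hc hic, by rw [huz i (hc hic)]; simpa using hic⟩

/-- Counting lemma B: exactly one vertex of each face attains each admissible outmap value. -/
lemma cardB (O : (Fin n → Bool) → Fin n → Bool) (hU : IsUSO O)
    (f : Fin n → Option Bool) (z : Finset (Fin n)) (hz : z ⊆ dims f) :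
    ((faceSet f).filter (fun u => outmap O f u = z)).card = 1 := by
  induction z using Finset.strongInductionOn with
  | _ z ih =>
  have hpart : (faceSet f).filter (fun u => outmap O f u ⊆ z)
      = z.powerset.biUnion (fun y => (faceSet f).filter (fun u => outmap O f u = y)) := by
    ext u
    simp only [mem_filter, mem_biUnion, mem_powerset]
    constructor
    · rintro ⟨hu, hsub⟩; exact ⟨outmap O f u, hsub, hu, rfl⟩
    · rintro ⟨y, hy, hu, rfl⟩; exact ⟨hu, hy⟩
  have hdisj : ∀ x ∈ z.powerset, ∀ y ∈ z.powerset, x ≠ y →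
      Disjoint ((faceSet f).filter (fun u => outmap O f u = x))
        ((faceSet f).filter (fun u => outmap O f u = y)) := by
    intro x _ y _ hxy
    rw [Finset.disjoint_left]
    intro u hux huy
    rw [mem_filter] at hux huy
    exact hxy (hux.2 ▸ huy.2)
  have hcount := cardA O hU f z hz
  rw [hpart, card_biUnion hdisj] at hcount
  have hzp : z ∈ z.powerset := mem_powerset_self z
  rw [← Finset.add_sum_erase _ _ hzp] at hcount
  have herase : ∀ y ∈ z.powerset.erase z,
      ((faceSet f).filter (fun u => outmap O f u = y)).card = 1 := by
    intro y hy
    rw [mem_erase, mem_powerset] at hy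
    exact ih y (ssubset_of_ne_of_subset hy.1 hy.2) (hy.2.trans hz)
  rw [Finset.sum_congr rfl herase, Finset.sum_const, smul_eq_mul, mul_one] at hcount
  have hcard : (z.powerset.erase z).card = 2 ^ z.card - 1 := by
    rw [card_erase_of_mem hzp, card_powerset]
  rw [hcard] at hcount
  have hpos : 1 ≤ 2 ^ z.card := Nat.one_le_two_pow
  omega

end SWaux

/-- Szabó–Welzl: an orientation is a USO iff every pair of distinct vertices spans a
dimension in which their half-edges are oriented in the same direction. -/
theorem stmt1 {n : ℕ} (O : (Fin n → Bool) → Fin n → Bool) (hc : Consistent O) :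
    IsUSO O ↔ ∀ v w : Fin n → Bool, v ≠ w →
      ∃ i, v i ≠ w i ∧ O v i ≠ O w i := by
  open SWaux Finset in
  constructor
  · -- USO → Szabó–Welzl condition
    intro hU v w hvw
    by_contra h
    push_neg at h
    set f : Fin n → Option Bool := fun i => if v i = w i then some (v i) else none with hf
    have hfnone : ∀ i, f i = none ↔ v i ≠ w i := by
      intro i
      by_cases hi : v i = w i <;> simp [hf, hi]
    have hvface : v ∈ faceSet f := by
      rw [mem_faceSet]
      intro i b hb
      by_cases hi : v i = w i
      · simp only [hf, if_pos hi] at hb; exact Option.some_injective _ hb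
      · simp [hf, if_neg hi] at hb
    have hwface : w ∈ faceSet f := by
      rw [mem_faceSet]
      intro i b hb
      by_cases hi : v i = w i
      · simp only [hf, if_pos hi] at hb
        rw [← hi]; exact Option.some_injective _ hb
      · simp [hf, if_neg hi] at hb
    set z := outmap O f v with hzdef
    have hz : z ⊆ dims f := outmap_subset_dims
    have hwz : outmap O f w = z := by
      ext i
      rw [hzdef, mem_outmap, mem_outmap]
      by_cases hi : f i = none
      · have hne : v i ≠ w i := (hfnone i).mp hi
        rw [h i hne]
      · simp [hi]
    have hcard := cardB O hU f z hz
    have h2 : 1 < ((faceSet f).filter (fun u => outmap O f u = z)).card := by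
      rw [Finset.one_lt_card]
      exact ⟨v, mem_filter.mpr ⟨hvface, rfl⟩, w, mem_filter.mpr ⟨hwface, hwz⟩, hvw⟩
    omega
  · -- Szabó–Welzl condition → USO
    intro hSW f
    -- a dimension where two distinct face vertices differ is free
    have hfree : ∀ u u' : Fin n → Bool, memFace f u → memFace f u' →
        ∀ i, u i ≠ u' i → f i = none := by
      intro u u' hu hu' i hne
      cases hfi : f i with
      | none => rfl
      | some b => exact absurd ((hu i b hfi).trans (hu' i b hfi).symm) hne
    -- uniqueness of sinks
    have huniq : ∀ u u' : Fin n → Bool, isSinkOf O f u → isSinkOf O f u' → u = u' := by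
      intro u u' hu hu'
      by_contra hne
      obtain ⟨i, hi1, hi2⟩ := hSW u u' hne
      have hfi : f i = none := hfree u u' hu.1 hu'.1 i hi1
      rw [hu.2 i hfi, hu'.2 i hfi] at hi2
      exact hi2 rfl
    -- existence via counting
    have hcards : ((dims f).powerset).card ≤ (faceSet f).card := by
      rw [card_powerset]
      rw [← card_powerset (dims f)]
      apply le_of_eq
      symm
      apply card_bij (fun (u : Fin n → Bool) _ => (dims f).filter (fun i => u i = true))
      · intro u _; exact mem_powerset.mpr (filter_subset _ _)
      · intro u hu u' hu' heq
        rw [mem_faceSet] at hu hu'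
        funext i
        cases hfi : f i with
        | some b => rw [hu i b hfi, hu' i b hfi]
        | none =>
          have := Finset.ext_iff.mp heq i
          simp only [mem_filter, mem_dims, hfi, true_and] at this
          exact Bool.coe_iff_coe.mp this
      · intro c hc
        rw [mem_powerset] at hc
        refine ⟨fun i => (f i).getD (decide (i ∈ c)), ?_, ?_⟩
        · rw [mem_faceSet]
          intro i b hb
          simp [hb]
        · ext i
          simp only [mem_filter, mem_dims]
          constructor
          · rintro ⟨hfi, hui⟩
            rw [hfi] at hui
            exact of_decide_eq_true hui
          · intro hic
            have hfi : f i = none := mem_dims.mp (hc hic)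
            exact ⟨hfi, by rw [hfi]; simpa using hic⟩
    have hmaps : ∀ (u : Fin n → Bool) (hu : u ∈ faceSet f),
        outmap O f u ∈ (dims f).powerset :=
      fun u _ => mem_powerset.mpr outmap_subset_dims
    have hinj : ∀ (u u' : Fin n → Bool), u ∈ faceSet f → u' ∈ faceSet f →
        outmap O f u = outmap O f u' → u = u' := by
      intro u u' hu hu' heq
      by_contra hne
      obtain ⟨i, hi1, hi2⟩ := hSW u u' hne
      have hfi : f i = none :=
        hfree u u' (mem_faceSet.mp hu) (mem_faceSet.mp hu') i hi1
      have := Finset.ext_iff.mp heq i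
      rw [mem_outmap, mem_outmap] at this
      simp only [hfi, true_and] at this
      exact hi2 (Bool.coe_iff_coe.mp this)
    obtain ⟨u, hu, hu0⟩ := Finset.surj_on_of_inj_on_of_card_le
      (fun u _ => outmap O f u) hmaps hinj hcards ∅ (empty_mem_powerset _)
    refine ⟨u, ⟨mem_faceSet.mp hu, ?_⟩, fun u' hu' => huniq u' u hu' ?_⟩
    · intro i hfi
      by_contra hO
      have : i ∈ outmap O f u := mem_outmap.mpr ⟨hfi, by simpa using hO⟩
      rw [← hu0] at this
      exact absurd this (notMem_empty i)
    · refine ⟨mem_faceSet.mp hu, ?_⟩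
      intro i hfi
      by_contra hO
      have : i ∈ outmap O f u := mem_outmap.mpr ⟨hfi, by simpa using hO⟩
      rw [← hu0] at this
      exact absurd this (notMem_empty i)
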